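/- In particular (taking u = a, v = b in the previous setting): for any σ ∈ S_{p+q}, one has σ ≤ b △ a in the right weak order, where a = σ|{1,...,p} and b = st(σ|{p+1,...,n}). -/

import Mathlib

/-- Standardization (0-based): replace each letter by its rank among the letters of `w`. -/
def stW (w : List ℕ) : List ℕ := w.map (fun x => (w.filter (· < x)).length)

/-- `w` is the one-line word of a permutation of `{0, …, n-1}` where `n = w.length`. -/
def IsPermWord (w : List ℕ) : Prop := w.Perm (List.range w.length)

/-- The inversion set of a word: pairs `(j, i)` with `j > i` and `j` to the left of `i`. -/
def invSet (w : List ℕ) : Set (ℕ × ℕ) :=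
  {p | p.2 < p.1 ∧ ∃ k l : ℕ, k < l ∧ w[k]? = some p.1 ∧ w[l]? = some p.2}

/-- The right weak order: inclusion of inversion sets. -/
def weakLe (u v : List ℕ) : Prop := invSet u ⊆ invSet v

/-- Left shifted concatenation `v △ u`: the word `v̄ u`, `v̄` being `v` shifted by `|u|`. -/
def triangle (v u : List ℕ) : List ℕ := v.map (· + u.length) ++ u

/-- Right shifted concatenation `u □ v`: the word `u v̄`, `v̄` being `v` shifted by `|u|`. -/
def squareC (u v : List ℕ) : List ℕ := u ++ v.map (· + u.length)

open List

lemma pair_sublist_of_exists {x y : ℕ} {w : List ℕ}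
    (h : ∃ k l : ℕ, k < l ∧ w[k]? = some x ∧ w[l]? = some y) : [x, y] <+ w := by
  obtain ⟨k, l, hkl, hk, hl⟩ := h
  obtain ⟨hklen, hkx⟩ := List.getElem?_eq_some_iff.mp hk
  have hy : y ∈ w.drop (k+1) := by
    apply List.mem_of_getElem? (i := l - (k+1))
    rw [List.getElem?_drop]
    rwa [Nat.add_sub_cancel' hkl]
  have h1 : [x, y] <+ x :: w.drop (k+1) :=
    List.cons_sublist_cons.mpr (List.singleton_sublist.mpr hy)
  have h2 : x :: w.drop (k+1) = w.drop k := by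
    rw [List.drop_eq_getElem_cons hklen, hkx]
  exact h1.trans (h2 ▸ w.drop_sublist k)

lemma exists_of_pair_sublist {x y : ℕ} : ∀ {w : List ℕ}, [x, y] <+ w →
    ∃ k l : ℕ, k < l ∧ w[k]? = some x ∧ w[l]? = some y := by
  intro w h
  induction w with
  | nil => simp at h
  | cons z w ih =>
    cases h with
    | cons _ h =>
      obtain ⟨k, l, hkl, hk, hl⟩ := ih h
      exact ⟨k+1, l+1, by omega, by simpa using hk, by simpa using hl⟩
    | cons_cons _ h =>
      obtain ⟨m, hm⟩ := List.getElem?_of_mem (List.singleton_sublist.mp h)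
      exact ⟨0, m+1, by omega, by simp, by simpa using hm⟩

lemma filter_range_length (p x : ℕ) (n : ℕ) :
    ((List.range n).filter (fun y => decide (p ≤ y) && decide (y < x))).length
      = min n x - min n p := by
  induction n with
  | zero => simp
  | succ n ih =>
    rw [List.range_succ, List.filter_append]
    by_cases h1 : p ≤ n <;> by_cases h2 : n < x <;>
      simp [h1, h2, ih] <;> omega


/-- For any `σ ∈ S_{p+q}`, one has `σ ≤ b △ a` in the right weak
order, where `a = σ|{0,…,p-1}` and `b = st(σ|{p,…,p+q-1})`. -/
theorem weakLe_triangle_self (p q : ℕ) (σ : List ℕ)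
    (hσ : IsPermWord σ) (hσn : σ.length = p + q) :
    weakLe σ (triangle (stW (σ.filter (fun x => p ≤ x))) (σ.filter (· < p))) := by
  have hperm : σ.Perm (List.range (p + q)) := by rw [← hσn]; exact hσ
  set A := σ.filter (· < p) with hA
  set B := σ.filter (fun x => p ≤ x) with hB
  -- length of A is p
  have hAperm : A.Perm ((List.range (p+q)).filter (· < p)) := hperm.filter _
  have hrfilt : (List.range (p+q)).filter (fun y => decide (y < p)) = List.range p := by
    rw [List.range_add, List.filter_append, List.filter_map]
    have h1 : (List.range p).filter (fun y => decide (y < p)) = List.range p :=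
      List.filter_eq_self.mpr (by intro a ha; simpa using List.mem_range.mp ha)
    have h2 : (List.range q).filter ((fun y => decide (y < p)) ∘ (p + ·)) = [] :=
      List.filter_eq_nil_iff.mpr (by intro a _; simp)
    rw [h1, h2]; simp
  have hAlen : A.length = p := by
    rw [hAperm.length_eq, hrfilt, List.length_range]
  -- every element of B satisfies p ≤ x < p + q
  have hBmem : ∀ x ∈ B, p ≤ x ∧ x < p + q := by
    intro x hx
    rw [hB, List.mem_filter] at hx
    exact ⟨by simpa using hx.2, List.mem_range.mp (hperm.subset hx.1)⟩
  -- stW B = B.map (· - p)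
  have hstW : stW B = B.map (· - p) := by
    apply List.map_congr_left
    intro x hx
    have hx' := hBmem x hx
    have hfilt : B.filter (· < x) = σ.filter (fun y => decide (p ≤ y) && decide (y < x)) := by
      rw [hB, List.filter_filter]
      congr 1
      funext a
      rw [Bool.and_comm]
    have hpermf : (B.filter (· < x)).Perm
        ((List.range (p+q)).filter (fun y => decide (p ≤ y) && decide (y < x))) := by
      rw [hfilt]; exact hperm.filter _
    rw [hpermf.length_eq, filter_range_length]
    omega
  -- triangle (stW B) A = B ++ A
  have htri : triangle (stW B) A = B ++ A := by
    rw [triangle, hstW, hAlen, List.map_map]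
    congr 1
    have hc : ∀ x ∈ B, ((fun x => x + p) ∘ fun x => x - p) x = id x := by
      intro x hx
      have := (hBmem x hx).1
      simp
      omega
    rw [List.map_congr_left hc, List.map_id]
  rw [htri]
  -- main inclusion
  rintro ⟨j, i⟩ ⟨hij, hex⟩
  refine ⟨hij, ?_⟩
  have hij' : i < j := hij
  have hsub : [j, i] <+ σ := pair_sublist_of_exists hex
  have hjmem : j ∈ σ := hsub.subset (by simp)
  have himem : i ∈ σ := hsub.subset (by simp)
  apply exists_of_pair_sublist
  by_cases hjp : j < p
  · -- then i < j < p, both in A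
    have : [j, i] <+ A := by
      have := hsub.filter (fun y => decide (y < p))
      rwa [List.filter_eq_self.mpr (by
        intro a ha; simp at ha ⊢; omega)] at this
    exact this.trans (List.sublist_append_right B A)
  · by_cases hip : i < p
    · -- j ∈ B, i ∈ A
      have hjB : j ∈ B := by rw [hB, List.mem_filter]; exact ⟨hjmem, by simpa using not_lt.mp hjp⟩
      have hiA : i ∈ A := by rw [hA, List.mem_filter]; exact ⟨himem, by simpa using hip⟩
      have : [j] ++ [i] <+ B ++ A :=
        (List.singleton_sublist.mpr hjB).append (List.singleton_sublist.mpr hiA)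
      simpa using this
    · -- both in B
      have : [j, i] <+ B := by
        have := hsub.filter (fun y => decide (p ≤ y))
        rwa [List.filter_eq_self.mpr (by
          intro a ha; simp at ha ⊢; omega)] at this
      exact this.trans (List.sublist_append_left B A)
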